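/- Let A be a symmetric 2×2 real matrix with det A = d, where |d| > 1, such that 1 is an eigenvalue of A. Let θ ∈ ℝ with cos θ ≠ 1, and let R_θ = [[cos θ, −sin θ], [sin θ, cos θ]] be the rotation matrix by angle θ. Then 1 is not an eigenvalue of R_θ · A; equivalently det(R_θ · A − I) ≠ 0. In fact det(R_θ · A − I) = (1 + d)(1 − cos θ). -/
import Mathlib


open Matrix

lemma eval_charpoly_fin_two' (M : Matrix (Fin 2) (Fin 2) ℝ) (x : ℝ) :
    M.charpoly.eval x = x ^ 2 - M.trace * x + M.det := by
  rw [Matrix.charpoly, Matrix.det_fin_two]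
  simp [Matrix.charmatrix_apply_eq, Matrix.charmatrix_apply_ne, Matrix.trace_fin_two,
    Matrix.det_fin_two]
  ring

/-- If `A` is a symmetric 2×2 real matrix with `det A = d`, `|d| > 1`, having
`1` as an eigenvalue, and `R_θ` is the rotation by an angle `θ` with
`cos θ ≠ 1`, then `1` is not an eigenvalue of `R_θ · A`; in fact
`det (R_θ · A - I) = (1 + d)(1 - cos θ) ≠ 0`. -/
theorem stmt_12 (A : Matrix (Fin 2) (Fin 2) ℝ) (hsym : Aᵀ = A) (d : ℝ)
    (hdet : A.det = d) (hd : 1 < |d|) (h1 : A.charpoly.IsRoot 1)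
    (θ : ℝ) (hθ : Real.cos θ ≠ 1) :
    let R : Matrix (Fin 2) (Fin 2) ℝ :=
      Matrix.of ![![Real.cos θ, -Real.sin θ], ![Real.sin θ, Real.cos θ]]
    ¬ (R * A).charpoly.IsRoot 1 ∧
      (R * A - 1).det = (1 + d) * (1 - Real.cos θ) ∧ (R * A - 1).det ≠ 0 := by
  intro R
  have hb : A 1 0 = A 0 1 := by
    have := congrFun (congrFun hsym 0) 1
    simpa [Matrix.transpose_apply] using this
  have hdet' : A 0 0 * A 1 1 - A 0 1 * A 1 0 = d := by
    rw [← hdet, Matrix.det_fin_two]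
  have htr : A 0 0 + A 1 1 = 1 + d := by
    have h := h1
    rw [Polynomial.IsRoot, eval_charpoly_fin_two', hdet] at h
    rw [Matrix.trace_fin_two] at h
    nlinarith [h]
  have hcs : Real.cos θ ^ 2 + Real.sin θ ^ 2 = 1 := by
    have := Real.sin_sq_add_cos_sq θ; nlinarith
  have e00 : (R * A) 0 0 = Real.cos θ * A 0 0 - Real.sin θ * A 1 0 := by
    simp [R, Matrix.mul_apply, Fin.sum_univ_two]; ring
  have e01 : (R * A) 0 1 = Real.cos θ * A 0 1 - Real.sin θ * A 1 1 := by
    simp [R, Matrix.mul_apply, Fin.sum_univ_two]; ring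
  have e10 : (R * A) 1 0 = Real.sin θ * A 0 0 + Real.cos θ * A 1 0 := by
    simp [R, Matrix.mul_apply, Fin.sum_univ_two]
  have e11 : (R * A) 1 1 = Real.sin θ * A 0 1 + Real.cos θ * A 1 1 := by
    simp [R, Matrix.mul_apply, Fin.sum_univ_two]
  have hne : (1 + d) * (1 - Real.cos θ) ≠ 0 := by
    have h1d : 1 + d ≠ 0 := by
      intro h
      rw [show d = -1 by linarith] at hd
      simp at hd
    have h2 : 1 - Real.cos θ ≠ 0 := fun h => hθ (by linarith)
    exact mul_ne_zero h1d h2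
  have hdeteq : (R * A - 1).det = (1 + d) * (1 - Real.cos θ) := by
    rw [Matrix.det_fin_two]
    simp only [Matrix.sub_apply, Matrix.one_apply_eq, Matrix.one_apply_ne (by decide : (0:Fin 2) ≠ 1),
      Matrix.one_apply_ne (by decide : (1:Fin 2) ≠ 0), sub_zero]
    rw [e00, e01, e10, e11, hb]
    have hdet'' : A 0 0 * A 1 1 - A 0 1 * A 0 1 = d := by rw [← hb] at hdet' ⊢; exact hdet'
    linear_combination (A 0 0 * A 1 1 - A 0 1 * A 0 1) * hcs + hdet'' - Real.cos θ * htr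
  refine ⟨?_, hdeteq, hdeteq ▸ hne⟩
  intro hroot
  rw [Polynomial.IsRoot, eval_charpoly_fin_two'] at hroot
  rw [Matrix.trace_fin_two, Matrix.det_fin_two, e00, e01, e10, e11, hb] at hroot
  apply hne
  have hdet'' : A 0 0 * A 1 1 - A 0 1 * A 0 1 = d := by rw [← hb] at hdet' ⊢; exact hdet'
  linear_combination hroot - (A 0 0 * A 1 1 - A 0 1 * A 0 1) * hcs - hdet'' + Real.cos θ * htr
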